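/- For any real number r and any λ > 0, the operator norm of the matrix M = [[λr, −λ^{−1}], [λ, 0]] ∈ SL(2,ℝ) equals λ√(a/2), where a = r² + 1 + λ^{−4} + √((r² + 1 + λ^{−4})² − 4λ^{−4}). -/

import Mathlib

open Real MeasureTheory Filter in
noncomputable def arccot (y : ℝ) : ℝ := Real.pi / 2 - Real.arctan y

/-- Euclidean (= ℓ²) operator norm of a 2×2 real matrix. -/
noncomputable def matNorm (M : Matrix (Fin 2) (Fin 2) ℝ) : ℝ :=
  ‖(Matrix.toEuclideanLin.trans LinearMap.toContinuousLinearMap) M‖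

/-- Cocycle iterates over the doubling map `x ↦ 2x`. -/
def cocycle (A : ℝ → Matrix (Fin 2) (Fin 2) ℝ) : ℕ → ℝ → Matrix (Fin 2) (Fin 2) ℝ
  | 0, _ => 1
  | n + 1, x => cocycle A n (2 * x) * A x

/-- Lyapunov exponent (as the infimum of the subadditive sequence). -/
noncomputable def lyap (A : ℝ → Matrix (Fin 2) (Fin 2) ℝ) : ℝ :=
  ⨅ n : ℕ, (1 / (n + 1 : ℝ)) * ∫ x in (0:ℝ)..1, Real.log (matNorm (cocycle A (n + 1) x))

/-- The angles θₙ. -/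
noncomputable def thetaN (v : ℝ → ℝ) (t lam : ℝ) : ℕ → ℝ → ℝ
  | 0, x => arccot (t - v x)
  | n + 1, x =>
      arccot (lam ^ 2 * ((t - v (2 ^ (n + 1) * x)) ^ 2 + 1) *
          Real.cot (thetaN v t lam n x))
        + arccot (t - v (2 ^ (n + 1) * x))

/-- The polar-form cocycle map. -/
noncomputable def polarA (v : ℝ → ℝ) (t lam : ℝ) (x : ℝ) : Matrix (Fin 2) (Fin 2) ℝ :=
  !![lam * Real.sqrt ((t - v (2 * x)) ^ 2 + 1), 0;
     0, lam⁻¹ / Real.sqrt ((t - v (2 * x)) ^ 2 + 1)] *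
  !![Real.cos (arccot (t - v x)), -Real.sin (arccot (t - v x));
     Real.sin (arccot (t - v x)), Real.cos (arccot (t - v x))]

/-- Distance to the nearest point of πℤ. -/
noncomputable def distRP1 (s : ℝ) : ℝ := |s - round (s / Real.pi) * Real.pi|

set_option maxHeartbeats 1000000 in
/-- For any `r` and `λ > 0`, the Euclidean operator norm of
`[[λr, −λ⁻¹], [λ, 0]]` equals `λ√(a/2)` with
`a = r² + 1 + λ⁻⁴ + √((r² + 1 + λ⁻⁴)² − 4λ⁻⁴)`. -/
theorem opNorm_schrodinger_conjugated (r lam : ℝ) (hlam : 0 < lam) :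
    matNorm !![lam * r, -lam⁻¹; lam, 0]
      = lam * Real.sqrt
          ((r ^ 2 + 1 + 1 / lam ^ 4 +
            Real.sqrt ((r ^ 2 + 1 + 1 / lam ^ 4) ^ 2 - 4 / lam ^ 4)) / 2) := by
  have hlam0 : lam ≠ 0 := ne_of_gt hlam
  set u : ℝ := lam⁻¹ with hu_def
  have hu : lam * u = 1 := mul_inv_cancel₀ hlam0
  have hu2 : lam ^ 2 * u ^ 2 = 1 := by rw [hu_def]; field_simp
  have hu0 : 0 < u := inv_pos.2 hlam
  have h14 : 1 / lam ^ 4 = u ^ 4 := by rw [hu_def]; field_simp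
  have h44 : 4 / lam ^ 4 = 4 * u ^ 4 := by rw [hu_def]; field_simp
  rw [h14, h44]
  set p : ℝ := r ^ 2 + 1 + u ^ 4 with hp
  have hdisc : 0 ≤ p ^ 2 - 4 * u ^ 4 := by
    rw [hp]
    nlinarith [sq_nonneg (1 - u ^ 2), sq_nonneg (1 - u ^ 4), sq_nonneg r,
      mul_nonneg (sq_nonneg r) (sq_nonneg (u ^ 2)), sq_nonneg (r ^ 2)]
  set s : ℝ := Real.sqrt (p ^ 2 - 4 * u ^ 4) with hsdef
  have hs0 : 0 ≤ s := Real.sqrt_nonneg _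
  have hs : s ^ 2 = p ^ 2 - 4 * u ^ 4 := Real.sq_sqrt hdisc
  set c : ℝ := lam ^ 2 * (p + s) / 2 with hc
  set A : ℝ := c - lam ^ 2 * (1 + r ^ 2) with hA_def
  set B : ℝ := c - u ^ 2 with hB_def
  have hc2 : c ^ 2 = lam ^ 2 * p * c - 1 := by
    rw [hc]
    linear_combination (lam ^ 4 / 4) * hs - (lam ^ 2 * u ^ 2 + 1) * hu2
  have hAB : A * B = r ^ 2 := by
    rw [hA_def, hB_def]
    linear_combination hc2 + lam ^ 2 * c * hp + (c * u ^ 2 + 1 + r ^ 2) * hu2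
  have hk1 : (1 + r ^ 2 - u ^ 4) ≤ s := by
    have h1 : (1 + r ^ 2 - u ^ 4) ^ 2 ≤ p ^ 2 - 4 * u ^ 4 := by
      rw [hp]; nlinarith [mul_nonneg (sq_nonneg r) (sq_nonneg (u ^ 2))]
    calc (1 + r ^ 2 - u ^ 4) ≤ |1 + r ^ 2 - u ^ 4| := le_abs_self _
      _ = Real.sqrt ((1 + r ^ 2 - u ^ 4) ^ 2) := (Real.sqrt_sq_eq_abs _).symm
      _ ≤ s := by rw [hsdef]; exact Real.sqrt_le_sqrt h1
  have hA0 : 0 ≤ A := by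
    rw [hA_def, hc, hp]
    nlinarith [mul_nonneg (sq_nonneg lam) (sub_nonneg.2 hk1)]
  have hk2 : (2 * u ^ 4 - p) ≤ s := by
    have h1 : (2 * u ^ 4 - p) ^ 2 ≤ p ^ 2 - 4 * u ^ 4 := by
      rw [hp]; nlinarith [mul_nonneg (sq_nonneg (u ^ 2)) (sq_nonneg r)]
    calc (2 * u ^ 4 - p) ≤ |2 * u ^ 4 - p| := le_abs_self _
      _ = Real.sqrt ((2 * u ^ 4 - p) ^ 2) := (Real.sqrt_sq_eq_abs _).symm
      _ ≤ s := by rw [hsdef]; exact Real.sqrt_le_sqrt h1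
  have hu4 : lam ^ 2 * u ^ 4 = u ^ 2 := by linear_combination u ^ 2 * hu2
  have hB0 : 0 ≤ B := by
    rw [hB_def, hc]
    have h := mul_nonneg (sq_nonneg lam) (by linarith : (0:ℝ) ≤ p + s - 2 * u ^ 4)
    nlinarith [h, hu4]
  have hp0 : 0 ≤ p := by rw [hp]; positivity
  have hc0 : 0 ≤ c := by
    rw [hc]
    exact div_nonneg (mul_nonneg (sq_nonneg lam) (add_nonneg hp0 hs0)) (by norm_num)
  -- the quadratic form is nonnegative
  have quad : ∀ x y : ℝ, 0 ≤ A * x ^ 2 + 2 * r * x * y + B * y ^ 2 := by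
    intro x y
    rcases eq_or_lt_of_le (add_nonneg hA0 hB0) with h | h
    · have hA' : A = 0 := by linarith
      have hB' : B = 0 := by linarith
      have hr : r = 0 := by nlinarith [hAB]
      simp [hA', hB', hr]
    · nlinarith [sq_nonneg (A * x + r * y), sq_nonneg (r * x + B * y), hAB, h,
        mul_pos h h]
  -- set up the operator
  set M : Matrix (Fin 2) (Fin 2) ℝ := !![lam * r, -u; lam, 0] with hM
  set T : EuclideanSpace ℝ (Fin 2) →L[ℝ] EuclideanSpace ℝ (Fin 2) :=
    (Matrix.toEuclideanLin.trans LinearMap.toContinuousLinearMap) M with hT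
  have hmat : matNorm M = ‖T‖ := rfl
  have hnormsq : ∀ v : Fin 2 → ℝ,
      ‖T ((WithLp.equiv 2 (Fin 2 → ℝ)).symm v)‖ ^ 2
        = (lam * r * v 0 - u * v 1) ^ 2 + (lam * v 0) ^ 2 := by
    intro v
    have happ : T ((WithLp.equiv 2 (Fin 2 → ℝ)).symm v)
        = (WithLp.equiv 2 (Fin 2 → ℝ)).symm (M.mulVec v) :=
      Matrix.toEuclideanLin_apply_piLp_toLp M v
    rw [happ, EuclideanSpace.norm_eq, Real.sq_sqrt (by positivity)]
    simp [hM, Matrix.mulVec, dotProduct, Fin.sum_univ_two,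
      Real.norm_eq_abs, sq_abs, WithLp.equiv_symm_apply, Matrix.vecHead, Matrix.vecTail]
    ring
  have hwnorm : ∀ v : Fin 2 → ℝ,
      ‖(WithLp.equiv 2 (Fin 2 → ℝ)).symm v‖ ^ 2 = v 0 ^ 2 + v 1 ^ 2 := by
    intro v
    rw [EuclideanSpace.norm_eq, Real.sq_sqrt (by positivity)]
    simp [Fin.sum_univ_two, sq_abs, WithLp.equiv_symm_apply]
  have hq : ∀ x y : ℝ, (lam * r * x - u * y) ^ 2 + (lam * x) ^ 2
      = c * (x ^ 2 + y ^ 2) - (A * x ^ 2 + 2 * r * x * y + B * y ^ 2) := by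
    intro x y
    rw [hA_def, hB_def]
    linear_combination (-(2 * r * x * y)) * hu
  have hub : ‖T‖ ≤ Real.sqrt c := by
    apply ContinuousLinearMap.opNorm_le_bound _ (Real.sqrt_nonneg c)
    intro w
    have h1 := hnormsq (WithLp.equiv 2 (Fin 2 → ℝ) w)
    have h2 := hwnorm (WithLp.equiv 2 (Fin 2 → ℝ) w)
    have heq : (WithLp.equiv 2 (Fin 2 → ℝ)).symm (WithLp.equiv 2 (Fin 2 → ℝ) w) = w := rfl
    rw [heq] at h1 h2
    have h3 : ‖T w‖ ^ 2 ≤ c * ‖w‖ ^ 2 := by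
      rw [h1, h2, hq]
      have := quad (WithLp.equiv 2 (Fin 2 → ℝ) w 0) (WithLp.equiv 2 (Fin 2 → ℝ) w 1)
      linarith
    calc ‖T w‖ = Real.sqrt (‖T w‖ ^ 2) := (Real.sqrt_sq (norm_nonneg _)).symm
      _ ≤ Real.sqrt (c * ‖w‖ ^ 2) := Real.sqrt_le_sqrt h3
      _ = Real.sqrt c * ‖w‖ := by
          rw [Real.sqrt_mul hc0, Real.sqrt_sq (norm_nonneg _)]
  have hlb : Real.sqrt c ≤ ‖T‖ := by
    by_cases hBr : B = 0 ∧ r = 0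
    · obtain ⟨hB', hr'⟩ := hBr
      have hcu : c = u ^ 2 := by
        have := hB_def
        rw [hB'] at this
        linarith [this.symm]
      set w : EuclideanSpace ℝ (Fin 2) := (WithLp.equiv 2 (Fin 2 → ℝ)).symm ![0, 1] with hw
      have h1 : ‖T w‖ ^ 2 = u ^ 2 := by
        have := hnormsq ![0, 1]
        simpa [hr', hw] using this
      have h2 : ‖w‖ ^ 2 = 1 := by simpa [hw] using hwnorm ![0, 1]
      have hTw : ‖T w‖ = u := by
        have := Real.sqrt_sq (norm_nonneg (T w))
        rw [h1] at this
        rw [← this, Real.sqrt_sq hu0.le]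
      have hww : ‖w‖ = 1 := by
        have := Real.sqrt_sq (norm_nonneg w)
        rw [h2, Real.sqrt_one] at this
        exact this.symm
      have := T.le_opNorm w
      rw [hTw, hww, mul_one] at this
      rw [hcu, Real.sqrt_sq hu0.le]
      exact this
    · have hpos : 0 < B ^ 2 + r ^ 2 := by
        rcases eq_or_lt_of_le (add_nonneg (sq_nonneg B) (sq_nonneg r)) with h | h
        · exfalso
          apply hBr
          constructor <;> nlinarith [sq_nonneg B, sq_nonneg r]
        · exact h
      set w : EuclideanSpace ℝ (Fin 2) := (WithLp.equiv 2 (Fin 2 → ℝ)).symm ![B, -r] with hw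
      have hE0 : A * B ^ 2 + 2 * r * B * (-r) + B * (-r) ^ 2 = 0 := by
        linear_combination B * hAB
      have h1 : ‖T w‖ ^ 2 = c * (B ^ 2 + r ^ 2) := by
        have h := hnormsq ![B, -r]
        have h0 : (![B, -r] : Fin 2 → ℝ) 0 = B := rfl
        have h1' : (![B, -r] : Fin 2 → ℝ) 1 = -r := rfl
        rw [h0, h1', hq] at h
        rw [h]
        nlinarith [hE0]
      have h2 : ‖w‖ ^ 2 = B ^ 2 + r ^ 2 := by
        have := hwnorm ![B, -r]
        simpa [hw] using this
      have hwpos : 0 < ‖w‖ := by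
        rcases eq_or_lt_of_le (norm_nonneg w) with h | h
        · exfalso; rw [← h] at h2; simp at h2; nlinarith
        · exact h
      have hTw : ‖T w‖ = Real.sqrt c * ‖w‖ := by
        have : ‖T w‖ = Real.sqrt (‖T w‖ ^ 2) := (Real.sqrt_sq (norm_nonneg _)).symm
        rw [this, h1, ← h2, Real.sqrt_mul hc0, Real.sqrt_sq (norm_nonneg _)]
      have := T.le_opNorm w
      rw [hTw] at this
      exact le_of_mul_le_mul_right this hwpos
  have hfin : ‖T‖ = Real.sqrt c := le_antisymm hub hlb
  rw [hmat, hfin, hc]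
  rw [show lam ^ 2 * (p + s) / 2 = lam ^ 2 * ((p + s) / 2) by ring]
  rw [Real.sqrt_mul (sq_nonneg lam), Real.sqrt_sq hlam.le]
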